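/- Let X be a separable Banach space, Y a Banach space, G ⊆ X open, and f : G → Y a mapping. Then there exists a σ-directionally porous set D ⊆ G such that for each x ∈ G \ D, either the set V_x of directions u ∈ X in which the one-sided Hadamard derivative f'_{H+}(x,u) exists is empty, or V_x is a closed linear subspace of X and u ↦ f'_{H+}(x,u) is linear on V_x. -/

import Mathlib

open Filter Topology Set Metric

set_option maxHeartbeats 1000000


section Defs
variable {X Y : Type*} [NormedAddCommGroup X] [NormedSpace ℝ X]
  [NormedAddCommGroup Y] [NormedSpace ℝ Y]

/-- One-sided directional derivative: `f'₊(x,v) = L`. -/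
def HasPosDirDeriv (f : X → Y) (x v : X) (L : Y) : Prop :=
  Tendsto (fun t : ℝ => t⁻¹ • (f (x + t • v) - f x)) (𝓝[>] (0:ℝ)) (𝓝 L)

/-- Two-sided directional derivative: `f'(x,v) = L`. -/
def HasDirDeriv (f : X → Y) (x v : X) (L : Y) : Prop :=
  Tendsto (fun t : ℝ => t⁻¹ • (f (x + t • v) - f x)) (𝓝[≠] (0:ℝ)) (𝓝 L)

/-- One-sided Hadamard directional derivative: `f'_{H+}(x,v) = L`. -/
def HasHadamardPosDirDeriv (f : X → Y) (x v : X) (L : Y) : Prop :=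
  Tendsto (fun p : X × ℝ => p.2⁻¹ • (f (x + p.2 • p.1) - f x))
    ((𝓝 v) ×ˢ (𝓝[>] (0:ℝ))) (𝓝 L)

/-- Two-sided Hadamard directional derivative: `f'_H(x,v) = L`. -/
def HasHadamardDirDeriv (f : X → Y) (x v : X) (L : Y) : Prop :=
  Tendsto (fun p : X × ℝ => p.2⁻¹ • (f (x + p.2 • p.1) - f x))
    ((𝓝 v) ×ˢ (𝓝[≠] (0:ℝ))) (𝓝 L)

/-- `f` is Lipschitz at the point `x`: `limsup_{y→x} ‖f y - f x‖/‖y-x‖ < ∞`. -/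
def LipschitzAtPt (f : X → Y) (x : X) : Prop :=
  ∃ K δ : ℝ, 0 < δ ∧ ∀ y, ‖y - x‖ < δ → ‖f y - f x‖ ≤ K * ‖y - x‖

/-- `A` is porous at `x` in the direction `v`. -/
def PorousAt (A : Set X) (x v : X) : Prop :=
  ∃ p > (0:ℝ), ∃ t : ℕ → ℝ, (∀ n, 0 < t n) ∧ Tendsto t atTop (𝓝 0) ∧
    ∀ n, ball (x + t n • v) (p * t n) ∩ A = ∅

/-- `A` is directionally porous. -/
def DirectionallyPorous (A : Set X) : Prop :=
  ∀ x ∈ A, ∃ v : X, v ≠ 0 ∧ PorousAt A x v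

/-- `A` is σ-directionally porous. -/
def SigmaDirectionallyPorous (A : Set X) : Prop :=
  ∃ s : ℕ → Set X, (∀ n, DirectionallyPorous (s n)) ∧ A = ⋃ n, s n

/-- The open cone `C(x,v,δ)`. -/
def Cone (x v : X) (δ : ℝ) : Set X :=
  {y : X | y ≠ x ∧ ‖v - ‖y - x‖⁻¹ • (y - x)‖ < δ}

/-- `f` is Hadamard differentiable at `x` with derivative `L`: the difference quotients
converge to `L v` uniformly in `v` from each compact set. -/
def HadamardDifferentiableAt (f : X → Y) (x : X) (L : X →L[ℝ] Y) : Prop :=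
  ∀ C : Set X, IsCompact C →
    TendstoUniformlyOn (fun (t : ℝ) (v : X) => t⁻¹ • (f (x + t • v) - f x))
      (fun v => L v) (𝓝[≠] (0:ℝ)) C

end Defs

namespace Stmt16Aux

variable {X Y : Type*} [NormedAddCommGroup X] [NormedSpace ℝ X]
  [NormedAddCommGroup Y] [NormedSpace ℝ Y]

/-- quantitative Hadamard modulus -/
def Mod (f : X → Y) (x u : X) (L : Y) (δ ε : ℝ) : Prop :=
  ∀ v : X, ∀ t : ℝ, ‖v - u‖ < δ → 0 < t → t < δ →
    ‖t⁻¹ • (f (x + t • v) - f x) - L‖ ≤ ε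

lemma hpdd_iff {f : X → Y} {x u : X} {L : Y} :
    HasHadamardPosDirDeriv f x u L ↔ ∀ ε > (0:ℝ), ∃ δ > (0:ℝ), Mod f x u L δ ε := by
  constructor
  · intro h ε hε
    have hU : {y : Y | dist y L < ε} ∈ 𝓝 L := Metric.ball_mem_nhds L hε
    have hpre := h hU
    rw [Filter.mem_map, Filter.mem_prod_iff] at hpre
    obtain ⟨s, hs, t, ht, hsub⟩ := hpre
    obtain ⟨δ₁, hδ₁, hball⟩ := Metric.mem_nhds_iff.1 hs
    obtain ⟨δ₂, hδ₂, hIoo⟩ := mem_nhdsGT_iff_exists_Ioo_subset.1 ht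
    refine ⟨min δ₁ δ₂, lt_min hδ₁ hδ₂, ?_⟩
    intro v τ hv hτ1 hτ2
    have h1 : v ∈ s := hball (by simpa [mem_ball, dist_eq_norm] using lt_of_lt_of_le hv (min_le_left _ _))
    have h2 : τ ∈ t := hIoo ⟨hτ1, lt_of_lt_of_le hτ2 (min_le_right _ _)⟩
    have := hsub (Set.mk_mem_prod h1 h2)
    simp only [Set.mem_preimage, Set.mem_setOf_eq, dist_eq_norm] at this
    exact le_of_lt this
  · intro h
    unfold HasHadamardPosDirDeriv
    rw [Metric.tendsto_nhds]
    intro ε hε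
    obtain ⟨δ, hδ, hmod⟩ := h (ε/2) (by linarith)
    have hmem : (ball u δ) ×ˢ (Ioo (0:ℝ) δ) ∈ (𝓝 u) ×ˢ (𝓝[>] (0:ℝ)) :=
      Filter.prod_mem_prod (Metric.ball_mem_nhds u hδ) (Ioo_mem_nhdsGT_of_mem ⟨le_rfl, hδ⟩)
    filter_upwards [hmem]
    rintro ⟨v, τ⟩ ⟨hv, hτ⟩
    rw [dist_eq_norm]
    have := hmod v τ (by simpa [mem_ball, dist_eq_norm] using hv) hτ.1 hτ.2
    linarith

lemma hpdd_mod {f : X → Y} {x u : X} {L : Y} (h : HasHadamardPosDirDeriv f x u L) :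
    ∀ ε > (0:ℝ), ∃ δ > (0:ℝ), Mod f x u L δ ε := hpdd_iff.1 h

lemma mod_shift {f : X → Y} {x u u' : X} {L : Y} {δ δ' ε : ℝ}
    (h : Mod f x u L δ ε) (h1 : ‖u' - u‖ + δ' ≤ δ) (h2 : δ' ≤ δ) :
    Mod f x u' L δ' ε := by
  intro v t hv ht1 ht2
  refine h v t ?_ ht1 (lt_of_lt_of_le ht2 h2)
  calc ‖v - u‖ ≤ ‖v - u'‖ + ‖u' - u‖ := norm_sub_le_norm_sub_add_norm_sub _ _ _
    _ < δ' + ‖u' - u‖ := by linarith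
    _ ≤ δ := by linarith

lemma exists_bad {f : X → Y} {x g : X} {M : Y} (h : ¬ HasHadamardPosDirDeriv f x g M) :
    ∃ ε > (0:ℝ), ∀ δ > (0:ℝ), ∃ w : X, ∃ s : ℝ,
      ‖w - g‖ < δ ∧ 0 < s ∧ s < δ ∧ ε ≤ ‖s⁻¹ • (f (x + s • w) - f x) - M‖ := by
  by_contra hc
  push_neg at hc
  apply h
  rw [hpdd_iff]
  intro ε hε
  obtain ⟨δ, hδ, H⟩ := hc ε hε
  exact ⟨δ, hδ, fun v t hv ht1 ht2 => le_of_lt (H v t hv ht1 ht2)⟩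

lemma hpdd_unique {f : X → Y} {x u : X} {L L' : Y}
    (h : HasHadamardPosDirDeriv f x u L) (h' : HasHadamardPosDirDeriv f x u L') : L = L' := by
  have : ((𝓝 u) ×ˢ (𝓝[>] (0:ℝ))).NeBot := Filter.prod_neBot.2 ⟨inferInstance, inferInstance⟩
  exact tendsto_nhds_unique h h'

lemma hpdd_dir {f : X → Y} {x u : X} {L : Y} (h : HasHadamardPosDirDeriv f x u L) :
    Tendsto (fun t : ℝ => t⁻¹ • (f (x + t • u) - f x)) (𝓝[>] (0:ℝ)) (𝓝 L) := by
  have hcomp : Tendsto (fun t : ℝ => ((u : X), t)) (𝓝[>] (0:ℝ)) ((𝓝 u) ×ˢ (𝓝[>] (0:ℝ))) :=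
    Tendsto.prodMk tendsto_const_nhds tendsto_id
  exact h.comp hcomp

lemma hpdd_zero {f : X → Y} {x : X} {L : Y} (h : HasHadamardPosDirDeriv f x 0 L) : L = 0 := by
  have h1 := hpdd_dir h
  have h2 : Tendsto (fun t : ℝ => t⁻¹ • (f (x + t • (0:X)) - f x)) (𝓝[>] (0:ℝ)) (𝓝 0) := by
    have : (fun t : ℝ => t⁻¹ • (f (x + t • (0:X)) - f x)) = fun _ => (0:Y) := by
      funext t; simp
    rw [this]; exact tendsto_const_nhds
  have : (𝓝[>] (0:ℝ)).NeBot := inferInstance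
  exact tendsto_nhds_unique h1 h2

lemma hpdd_smul {f : X → Y} {x u : X} {L : Y} {c : ℝ} (hc : 0 < c)
    (h : HasHadamardPosDirDeriv f x u L) : HasHadamardPosDirDeriv f x (c • u) (c • L) := by
  have hφ : Tendsto (fun p : X × ℝ => (c⁻¹ • p.1, c * p.2))
      ((𝓝 (c • u)) ×ˢ (𝓝[>] (0:ℝ))) ((𝓝 u) ×ˢ (𝓝[>] (0:ℝ))) := by
    apply Tendsto.prodMk
    · have : Tendsto (fun p : X × ℝ => c⁻¹ • p.1) ((𝓝 (c • u)) ×ˢ (𝓝[>] (0:ℝ)))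
          (𝓝 (c⁻¹ • (c • u))) := ((continuous_const_smul (c⁻¹)).tendsto _).comp tendsto_fst
      simpa [smul_smul, inv_mul_cancel₀ (ne_of_gt hc)] using this
    · rw [tendsto_nhdsWithin_iff]
      constructor
      · have hsnd : Tendsto (Prod.snd : X × ℝ → ℝ) ((𝓝 (c • u)) ×ˢ (𝓝[>] (0:ℝ))) (𝓝 0) :=
          tendsto_snd.mono_right nhdsWithin_le_nhds
        have : Tendsto (fun p : X × ℝ => c * p.2) ((𝓝 (c • u)) ×ˢ (𝓝[>] (0:ℝ))) (𝓝 (c * 0)) :=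
          (tendsto_const_nhds.mul hsnd)
        simpa using this
      · filter_upwards [Filter.prod_mem_prod (univ_mem) self_mem_nhdsWithin]
        rintro ⟨v, t⟩ ⟨-, ht⟩
        exact mul_pos hc ht
  have hcomp := h.comp hφ
  have hc' : c ≠ 0 := ne_of_gt hc
  refine Tendsto.congr (f₁ := fun p : X × ℝ => c • (((fun q : X × ℝ =>
      q.2⁻¹ • (f (x + q.2 • q.1) - f x)) ∘ (fun p : X × ℝ => (c⁻¹ • p.1, c * p.2))) p))
      ?_ (hcomp.const_smul c)
  rintro ⟨v, t⟩
  simp only [Function.comp_apply, smul_smul]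
  have h1 : c * t * c⁻¹ = t := by
    rw [mul_comm c t, mul_assoc, mul_inv_cancel₀ hc', mul_one]
  have h2 : c * (c * t)⁻¹ = t⁻¹ := by
    rw [mul_inv, ← mul_assoc, mul_inv_cancel₀ hc', one_mul]
  rw [h1, h2]

end Stmt16Aux
namespace Stmt16Aux

variable {X Y : Type*} [NormedAddCommGroup X] [NormedSpace ℝ X]
  [NormedAddCommGroup Y] [NormedSpace ℝ Y]

lemma scale_est {A L : Y} {c s ε : ℝ} (hc : 0 < c) (hs : 0 < s)
    (h : ‖(c*s)⁻¹ • A - L‖ ≤ ε) : ‖s⁻¹ • A - c • L‖ ≤ c * ε := by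
  have hrw : s⁻¹ • A = c • ((c*s)⁻¹ • A) := by
    rw [smul_smul, mul_inv, ← mul_assoc, mul_inv_cancel₀ hc.ne', one_mul]
  rw [hrw, ← smul_sub, norm_smul, Real.norm_of_nonneg hc.le]
  exact mul_le_mul_of_nonneg_left h hc.le

/-- frequently-bad difference quotients near direction `g`, with aperture `c`, gap `ε`. -/
def Bad (f : X → Y) (x g : X) (M : Y) (ε c : ℝ) : Prop :=
  ∀ δ > (0:ℝ), ∃ w : X, ∃ s : ℝ, ‖w - g‖ ≤ c ∧ 0 < s ∧ s < δ ∧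
    ε ≤ ‖s⁻¹ • (f (x + s • w) - f x) - M‖

noncomputable def rho (δ₁ : ℝ) : ℝ := min δ₁ 1 / 4

lemma rho_pos {δ₁ : ℝ} (h : 0 < δ₁) : 0 < rho δ₁ := by
  unfold rho; positivity

lemma rho_le {δ₁ : ℝ} : rho δ₁ ≤ δ₁ / 4 := by
  unfold rho
  have := min_le_left δ₁ 1
  linarith

lemma rho_le_one {δ₁ : ℝ} : rho δ₁ ≤ 1 / 4 := by
  unfold rho
  have := min_le_right δ₁ 1
  linarith

def pieceSub (f : X → Y) (u' uh' : X) (ε δ₁ : ℝ) (K : ℕ) : Set X :=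
  {x | u' ≠ 0 ∧ 0 < ε ∧ 0 < δ₁ ∧ ‖u'‖ ≤ K ∧ ‖uh'‖ ≤ K ∧
    ∃ L Lh : Y, ‖L‖ ≤ K ∧ ‖Lh‖ ≤ K ∧ Mod f x u' L δ₁ (ε/100) ∧ Mod f x uh' Lh δ₁ (ε/100) ∧
      Bad f x (uh' - u') (Lh - L) ε (rho δ₁ / 2)}

lemma pieceSub_key (f : X → Y) {u' uh' : X} {ε δ₁ : ℝ} {K : ℕ} {x y w : X} {s : ℝ}
    {L Lh Ly Lhy : Y}
    (hε : 0 < ε) (hδ₁ : 0 < δ₁)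
    (hKu : ‖u'‖ ≤ K) (hKuh : ‖uh'‖ ≤ K)
    (hL : ‖L‖ ≤ K) (hLh : ‖Lh‖ ≤ K) (hLy : ‖Ly‖ ≤ K) (hLhy : ‖Lhy‖ ≤ K)
    (mx1 : Mod f x u' L δ₁ (ε/100)) (mx2 : Mod f x uh' Lh δ₁ (ε/100))
    (my1 : Mod f y u' Ly δ₁ (ε/100)) (my2 : Mod f y uh' Lhy δ₁ (ε/100))
    {N : ℕ} (hN1 : 1 ≤ N) (hNδ : (4*(K:ℝ)+4)/δ₁ ≤ N) (hNε : 400*((K:ℝ)+1)/ε ≤ N)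
    (hw : ‖w - (uh' - u')‖ ≤ rho δ₁ / 2)
    (hs : 0 < s) (hsN : s < δ₁/(N+2))
    (he : ‖y - (x + s • (w - uh'))‖ ≤ rho δ₁ * s)
    (hbad : ε ≤ ‖s⁻¹ • (f (x + s • w) - f x) - (Lh - L)‖) : False := by
  have hsne : s ≠ 0 := hs.ne'
  set ρ := rho δ₁ with hρdef
  have hρ : 0 < ρ := rho_pos hδ₁
  have hρδ : ρ ≤ δ₁ / 4 := rho_le
  have hρ1 : ρ ≤ 1 / 4 := rho_le_one
  set ε₀ := ε / 100 with hε₀def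
  have hε₀ : 0 < ε₀ := by positivity
  have hNpos : (0:ℝ) < N := by exact_mod_cast Nat.lt_of_lt_of_le Nat.zero_lt_one hN1
  have hN2 : (0:ℝ) < (N:ℝ) + 2 := by linarith
  have hsδ : s < δ₁ := by
    have : δ₁ / ((N:ℝ)+2) ≤ δ₁ := by
      rw [div_le_iff₀ hN2]; nlinarith
    linarith
  set e := y - (x + s • (w - uh')) with hedef
  have hee : ‖e‖ ≤ ρ * s := he
  have hseinv : ‖s⁻¹ • e‖ ≤ ρ := by
    rw [norm_smul, Real.norm_eq_abs, abs_inv, abs_of_pos hs]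
    rw [inv_mul_le_iff₀ hs]
    calc ‖e‖ ≤ ρ * s := hee
      _ = s * ρ := by ring
  -- (1)  x = y + s • v₁
  have hyx : ‖x - y‖ ≤ ((K:ℝ) + 1) * s := by
    have : x - y = -(s • (w - uh')) - e := by rw [hedef]; abel
    rw [this]
    calc ‖-(s • (w - uh')) - e‖ ≤ ‖s • (w - uh')‖ + ‖e‖ := by
          rw [sub_eq_add_neg]
          refine le_trans (norm_add_le _ _) ?_
          simp
      _ ≤ s * ‖w - uh'‖ + ρ * s := by
          rw [norm_smul, Real.norm_of_nonneg hs.le]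
          exact add_le_add le_rfl hee
      _ ≤ ((K:ℝ) + 1) * s := by
          have hwb : ‖w - uh'‖ ≤ ‖w - (uh' - u')‖ + ‖u'‖ := by
            have : w - uh' = (w - (uh' - u')) + -u' := by abel
            rw [this]
            refine le_trans (norm_add_le _ _) ?_
            simp
          have : ‖w - uh'‖ ≤ ρ/2 + K := le_trans hwb (by linarith)
          nlinarith
  have a1 : ‖s⁻¹ • (f x - f y) - Ly‖ ≤ ε₀ := by
    have hpt : y + s • (uh' - w - s⁻¹ • e) = x := by
      rw [hedef]; match_scalars <;> field_simp <;> ring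
    have hdir : ‖(uh' - w - s⁻¹ • e) - u'‖ < δ₁ := by
      have h1 : (uh' - w - s⁻¹ • e) - u' = ((uh' - u') - w) - s⁻¹ • e := by abel
      rw [h1]
      calc ‖((uh' - u') - w) - s⁻¹ • e‖ ≤ ‖(uh' - u') - w‖ + ‖s⁻¹ • e‖ := norm_sub_le _ _
        _ ≤ ρ/2 + ρ := by rw [norm_sub_rev]; exact add_le_add hw hseinv
        _ < δ₁ := by linarith
    have := my1 _ s hdir hs hsδ
    rwa [hpt] at this
  -- (2)  z = y + s • v₂ , z := x + s • w
  have a2 : ‖s⁻¹ • (f (x + s • w) - f y) - Lhy‖ ≤ ε₀ := by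
    have hpt : y + s • (uh' - s⁻¹ • e) = x + s • w := by
      rw [hedef]; match_scalars <;> field_simp <;> ring
    have hdir : ‖(uh' - s⁻¹ • e) - uh'‖ < δ₁ := by
      have h1 : (uh' - s⁻¹ • e) - uh' = -(s⁻¹ • e) := by abel
      rw [h1, norm_neg]
      calc ‖s⁻¹ • e‖ ≤ ρ := hseinv
        _ < δ₁ := by linarith
    have := my2 _ s hdir hs hsδ
    rwa [hpt] at this
  -- (3)
  have a3 : ‖s⁻¹ • (f (x + s • u') - f x) - L‖ ≤ ε₀ := by
    have := mx1 u' s (by simpa using hδ₁) hs hsδ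
    exact this
  -- (4)
  have a4 : ‖s⁻¹ • (f (x + s • u') - f y) - (2:ℝ) • Ly‖ ≤ 2 * ε₀ := by
    have hpt : y + (2*s) • ((2:ℝ)⁻¹ • (u' + uh' - w - s⁻¹ • e)) = x + s • u' := by
      rw [hedef]; match_scalars <;> field_simp <;> ring
    have hdir : ‖((2:ℝ)⁻¹ • (u' + uh' - w - s⁻¹ • e)) - u'‖ < δ₁ := by
      have h1 : ((2:ℝ)⁻¹ • (u' + uh' - w - s⁻¹ • e)) - u' =
          (2:ℝ)⁻¹ • (((uh' - u') - w) - s⁻¹ • e) := by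
        match_scalars <;> norm_num
      rw [h1, norm_smul]
      have : ‖((uh' - u') - w) - s⁻¹ • e‖ ≤ ρ/2 + ρ := by
        calc ‖((uh' - u') - w) - s⁻¹ • e‖ ≤ ‖(uh' - u') - w‖ + ‖s⁻¹ • e‖ := norm_sub_le _ _
          _ ≤ ρ/2 + ρ := by rw [norm_sub_rev]; exact add_le_add hw hseinv
      rw [Real.norm_eq_abs]
      have h2 : |(2:ℝ)⁻¹| = 2⁻¹ := by norm_num
      rw [h2]
      nlinarith
    have h2s : 0 < 2*s := by linarith
    have h2sδ : 2*s < δ₁ := by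
      have : ((N:ℝ)+2) * s < δ₁ := by
        rw [← lt_div_iff₀' hN2]; exact hsN
      nlinarith
    have := my1 _ (2*s) hdir h2s h2sδ
    rw [hpt] at this
    exact scale_est (by norm_num) hs this
  -- (5)
  have a5 : ‖s⁻¹ • (f (x + ((N:ℝ)*s) • uh') - f x) - (N:ℝ) • Lh‖ ≤ (N:ℝ) * ε₀ := by
    have hNs : 0 < (N:ℝ)*s := mul_pos hNpos hs
    have hNsδ : (N:ℝ)*s < δ₁ := by
      have : ((N:ℝ)+2) * s < δ₁ := by rw [← lt_div_iff₀' hN2]; exact hsN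
      nlinarith
    have := mx2 uh' ((N:ℝ)*s) (by simpa using hδ₁) hNs hNsδ
    have h2 : x + ((N:ℝ)*s) • uh' = x + ((N:ℝ)*s) • uh' := rfl
    exact scale_est hNpos hs this
  -- (6)
  have a6 : ‖s⁻¹ • (f (x + ((N:ℝ)*s) • uh') - f y) - ((N:ℝ)+1) • Lhy‖ ≤ ((N:ℝ)+1) * ε₀ := by
    have hN1pos : (0:ℝ) < (N:ℝ)+1 := by linarith
    have hpt : y + (((N:ℝ)+1)*s) • ((((N:ℝ)+1))⁻¹ • (((N:ℝ)+1) • uh' - w - s⁻¹ • e))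
        = x + ((N:ℝ)*s) • uh' := by
      rw [hedef]; match_scalars <;> field_simp <;> ring
    have hwnorm : ‖w‖ ≤ 2*(K:ℝ) + 1 := by
      have h1 : w = (w - (uh' - u')) + (uh' - u') := by abel
      rw [h1]
      calc ‖(w - (uh' - u')) + (uh' - u')‖ ≤ ‖w - (uh' - u')‖ + ‖uh' - u'‖ := norm_add_le _ _
        _ ≤ ρ/2 + (‖uh'‖ + ‖u'‖) := add_le_add hw (norm_sub_le _ _)
        _ ≤ 2*(K:ℝ) + 1 := by
            have : ρ/2 ≤ 1 := by linarith
            linarith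
    have hdir : ‖((((N:ℝ)+1))⁻¹ • (((N:ℝ)+1) • uh' - w - s⁻¹ • e)) - uh'‖ < δ₁ := by
      have h1 : ((((N:ℝ)+1))⁻¹ • (((N:ℝ)+1) • uh' - w - s⁻¹ • e)) - uh' =
          (((N:ℝ)+1))⁻¹ • (-w - s⁻¹ • e) := by
        match_scalars <;> field_simp <;> ring
      rw [h1, norm_smul, Real.norm_eq_abs, abs_inv, abs_of_pos hN1pos]
      have h2 : ‖-w - s⁻¹ • e‖ ≤ 2*(K:ℝ) + 2 := by
        calc ‖-w - s⁻¹ • e‖ ≤ ‖-w‖ + ‖s⁻¹ • e‖ := norm_sub_le _ _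
          _ ≤ 2*(K:ℝ) + 1 + ρ := by rw [norm_neg]; exact add_le_add hwnorm hseinv
          _ ≤ 2*(K:ℝ) + 2 := by linarith
      have h3 : (((N:ℝ)+1))⁻¹ * (2*(K:ℝ)+2) ≤ δ₁ / 2 := by
        rw [inv_mul_le_iff₀ hN1pos]
        have h4 : (4*(K:ℝ)+4)/δ₁ ≤ (N:ℝ) := hNδ
        rw [div_le_iff₀ hδ₁] at h4
        nlinarith
      have h5 : (((N:ℝ)+1))⁻¹ * ‖-w - s⁻¹ • e‖ ≤ (((N:ℝ)+1))⁻¹ * (2*(K:ℝ)+2) :=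
        mul_le_mul_of_nonneg_left h2 (by positivity)
      calc (((N:ℝ)+1))⁻¹ * ‖-w - s⁻¹ • e‖ ≤ δ₁/2 := le_trans h5 h3
        _ < δ₁ := by linarith
    have hN1s : 0 < ((N:ℝ)+1)*s := mul_pos hN1pos hs
    have hN1sδ : ((N:ℝ)+1)*s < δ₁ := by
      have : ((N:ℝ)+2) * s < δ₁ := by rw [← lt_div_iff₀' hN2]; exact hsN
      nlinarith
    have := my2 _ (((N:ℝ)+1)*s) hdir hN1s hN1sδ
    rw [hpt] at this
    exact scale_est hN1pos hs this
  -- assemble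
  set a := s⁻¹ • (f x - f y) with hadef
  set b := s⁻¹ • (f (x + s • w) - f y) with hbdef
  set g := s⁻¹ • (f (x + s • u') - f x) with hgdef
  set g' := s⁻¹ • (f (x + s • u') - f y) with hg'def
  set h := s⁻¹ • (f (x + ((N:ℝ)*s) • uh') - f x) with hhdef
  set h' := s⁻¹ • (f (x + ((N:ℝ)*s) • uh') - f y) with hh'def
  have hid1 : g' - g = a := by
    rw [hg'def, hgdef, hadef, ← smul_sub]
    congr 1; abel
  have hid2 : h' - h = a := by
    rw [hh'def, hhdef, hadef, ← smul_sub]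
    congr 1; abel
  have hidb : b - a = s⁻¹ • (f (x + s • w) - f x) := by
    rw [hbdef, hadef, ← smul_sub]
    congr 1; abel
  have E1 : ‖L - Ly‖ ≤ 4 * ε₀ := by
    have hidE : L - Ly = (L - g) + ((g' - (2:ℝ)•Ly) - (a - Ly)) := by
      rw [← hid1]; module
    rw [hidE]
    calc ‖(L - g) + ((g' - (2:ℝ)•Ly) - (a - Ly))‖
        ≤ ‖L - g‖ + ‖(g' - (2:ℝ)•Ly) - (a - Ly)‖ := norm_add_le _ _
      _ ≤ ‖L - g‖ + (‖g' - (2:ℝ)•Ly‖ + ‖a - Ly‖) := by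
          have := norm_sub_le (g' - (2:ℝ)•Ly) (a - Ly)
          linarith
      _ ≤ ε₀ + (2*ε₀ + ε₀) := by
          have h1 : ‖L - g‖ ≤ ε₀ := by rw [norm_sub_rev]; exact a3
          exact add_le_add h1 (add_le_add a4 a1)
      _ = 4 * ε₀ := by ring
  have E2 : ‖Lh - Lhy‖ ≤ 4 * ε₀ + ε/200 := by
    have hidE : (N:ℝ)•Lh - (N:ℝ)•Lhy =
        -(h - (N:ℝ)•Lh) + ((h' - ((N:ℝ)+1)•Lhy) - (a - Ly)) + (Lhy - Ly) := by
      rw [← hid2]; module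
    have hE : ‖(N:ℝ)•Lh - (N:ℝ)•Lhy‖ ≤ (2*(N:ℝ)+2)*ε₀ + 2*(K:ℝ) := by
      rw [hidE]
      calc ‖-(h - (N:ℝ)•Lh) + ((h' - ((N:ℝ)+1)•Lhy) - (a - Ly)) + (Lhy - Ly)‖
          ≤ ‖-(h - (N:ℝ)•Lh) + ((h' - ((N:ℝ)+1)•Lhy) - (a - Ly))‖ + ‖Lhy - Ly‖ :=
            norm_add_le _ _
        _ ≤ ‖-(h - (N:ℝ)•Lh)‖ + ‖(h' - ((N:ℝ)+1)•Lhy) - (a - Ly)‖ + ‖Lhy - Ly‖ := by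
            have := norm_add_le (-(h - (N:ℝ)•Lh)) ((h' - ((N:ℝ)+1)•Lhy) - (a - Ly))
            linarith
        _ ≤ ‖-(h - (N:ℝ)•Lh)‖ + (‖h' - ((N:ℝ)+1)•Lhy‖ + ‖a - Ly‖) + ‖Lhy - Ly‖ := by
            have := norm_sub_le (h' - ((N:ℝ)+1)•Lhy) (a - Ly)
            linarith
        _ ≤ (N:ℝ)*ε₀ + (((N:ℝ)+1)*ε₀ + ε₀) + 2*(K:ℝ) := by
            have h1 : ‖-(h - (N:ℝ)•Lh)‖ ≤ (N:ℝ)*ε₀ := by rw [norm_neg]; exact a5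
            have h2 : ‖Lhy - Ly‖ ≤ 2*(K:ℝ) := by
              calc ‖Lhy - Ly‖ ≤ ‖Lhy‖ + ‖Ly‖ := norm_sub_le _ _
                _ ≤ 2*(K:ℝ) := by linarith
            exact add_le_add (add_le_add h1 (add_le_add a6 a1)) h2
        _ = (2*(N:ℝ)+2)*ε₀ + 2*(K:ℝ) := by ring
    have hnorm : ‖(N:ℝ)•Lh - (N:ℝ)•Lhy‖ = (N:ℝ) * ‖Lh - Lhy‖ := by
      rw [← smul_sub, norm_smul, Real.norm_of_nonneg hNpos.le]
    rw [hnorm] at hE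
    have hKN : 2*(K:ℝ) / (N:ℝ) ≤ ε/200 := by
      rw [div_le_iff₀ hNpos]
      have h4 : 400*((K:ℝ)+1)/ε ≤ (N:ℝ) := hNε
      rw [div_le_iff₀ hε] at h4
      have h5 : ε/200 * (N:ℝ) = ((N:ℝ)*ε)/200 := by ring
      rw [h5]
      linarith
    have h2N : (2*(N:ℝ)+2)*ε₀ / (N:ℝ) ≤ 4*ε₀ := by
      rw [div_le_iff₀ hNpos]
      have hN1R : (1:ℝ) ≤ (N:ℝ) := by exact_mod_cast hN1
      nlinarith [mul_nonneg hε₀.le (sub_nonneg.2 hN1R)]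
    have : ‖Lh - Lhy‖ ≤ ((2*(N:ℝ)+2)*ε₀ + 2*(K:ℝ)) / (N:ℝ) := by
      rw [le_div_iff₀ hNpos]
      linarith [hE]
    calc ‖Lh - Lhy‖ ≤ ((2*(N:ℝ)+2)*ε₀ + 2*(K:ℝ)) / (N:ℝ) := this
      _ = (2*(N:ℝ)+2)*ε₀ / (N:ℝ) + 2*(K:ℝ)/(N:ℝ) := by ring
      _ ≤ 4*ε₀ + ε/200 := add_le_add h2N hKN
  -- final contradiction
  have hfin : ‖(b - a) - (Lh - L)‖ ≤ 10*ε₀ + ε/200 := by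
    have hidE : (b - a) - (Lh - L) = ((b - Lhy) - (a - Ly)) + (Lhy - Lh) + (L - Ly) := by
      module
    rw [hidE]
    calc ‖((b - Lhy) - (a - Ly)) + (Lhy - Lh) + (L - Ly)‖
        ≤ ‖(b - Lhy) - (a - Ly)‖ + ‖Lhy - Lh‖ + ‖L - Ly‖ := by
          have h1 := norm_add_le (((b - Lhy) - (a - Ly)) + (Lhy - Lh)) (L - Ly)
          have h2 := norm_add_le ((b - Lhy) - (a - Ly)) (Lhy - Lh)
          linarith
      _ ≤ (‖b - Lhy‖ + ‖a - Ly‖) + (4*ε₀ + ε/200) + 4*ε₀ := by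
          have h3 := norm_sub_le (b - Lhy) (a - Ly)
          have h4 : ‖Lhy - Lh‖ ≤ 4*ε₀ + ε/200 := by rw [norm_sub_rev]; exact E2
          linarith
      _ ≤ (ε₀ + ε₀) + (4*ε₀ + ε/200) + 4*ε₀ := by
          have := add_le_add a2 a1
          linarith
      _ = 10*ε₀ + ε/200 := by ring
  rw [hidb] at hfin
  have : ε ≤ 10*ε₀ + ε/200 := le_trans hbad hfin
  rw [hε₀def] at this
  linarith

end Stmt16Aux

namespace Stmt16Aux

variable {X Y : Type*} [NormedAddCommGroup X] [NormedSpace ℝ X]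
  [NormedAddCommGroup Y] [NormedSpace ℝ Y]

lemma pieceSub_dirPorous (f : X → Y) (u' uh' : X) (ε δ₁ : ℝ) (K : ℕ) :
    DirectionallyPorous (pieceSub f u' uh' ε δ₁ K) := by
  intro x hx
  obtain ⟨hu', hε, hδ₁, hKu, hKuh, L, Lh, hL, hLh, mx1, mx2, hbad⟩ := hx
  set ρ := rho δ₁ with hρdef
  have hρ : 0 < ρ := rho_pos hδ₁
  obtain ⟨N₀, hN₀⟩ := exists_nat_ge (max ((4*(K:ℝ)+4)/δ₁) (400*((K:ℝ)+1)/ε))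
  set N := N₀ + 1 with hNdef
  have hN1 : 1 ≤ N := Nat.le_add_left 1 N₀
  have hNcast : (N₀:ℝ) ≤ (N:ℝ) := by
    have : (N₀:ℝ) ≤ (N₀:ℝ) + 1 := by linarith
    simpa [hNdef] using this
  have hNδ : (4*(K:ℝ)+4)/δ₁ ≤ (N:ℝ) :=
    le_trans (le_trans (le_max_left _ _) hN₀) hNcast
  have hNε : 400*((K:ℝ)+1)/ε ≤ (N:ℝ) :=
    le_trans (le_trans (le_max_right _ _) hN₀) hNcast
  have hN2 : (0:ℝ) < (N:ℝ) + 2 := by positivity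
  -- selection of hole scales
  have hsel : ∀ n : ℕ, ∃ s : ℝ, 0 < s ∧ s < 1/(n+1) ∧
      ball (x + s • (-u')) (ρ/2 * s) ∩ pieceSub f u' uh' ε δ₁ K = ∅ := by
    intro n
    have hδpos : 0 < min (δ₁/((N:ℝ)+2)) (1/((n:ℝ)+1)) := by
      apply lt_min
      · positivity
      · positivity
    obtain ⟨w, s, hw, hs, hsδ, hgap⟩ := hbad _ hδpos
    refine ⟨s, hs, lt_of_lt_of_le hsδ (min_le_right _ _), ?_⟩
    rw [Set.eq_empty_iff_forall_notMem]
    rintro y ⟨hy1, hy2⟩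
    obtain ⟨-, -, -, -, -, Ly, Lhy, hLy, hLhy, my1, my2, -⟩ := hy2
    have hsN : s < δ₁/((N:ℝ)+2) := lt_of_lt_of_le hsδ (min_le_left _ _)
    have he : ‖y - (x + s • (w - uh'))‖ ≤ ρ * s := by
      have h1 : y - (x + s • (w - uh')) = (y - (x + s • (-u'))) - s • (w - (uh' - u')) := by
        module
      rw [h1]
      have h2 : ‖y - (x + s • (-u'))‖ < ρ/2 * s := by
        rw [← dist_eq_norm]; exact mem_ball.1 hy1
      have h3 : ‖s • (w - (uh' - u'))‖ ≤ s * (ρ/2) := by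
        rw [norm_smul, Real.norm_of_nonneg hs.le]
        exact mul_le_mul_of_nonneg_left hw hs.le
      calc ‖(y - (x + s • (-u'))) - s • (w - (uh' - u'))‖
          ≤ ‖y - (x + s • (-u'))‖ + ‖s • (w - (uh' - u'))‖ := norm_sub_le _ _
        _ ≤ ρ/2 * s + s * (ρ/2) := add_le_add h2.le h3
        _ = ρ * s := by ring
    exact pieceSub_key f hε hδ₁ hKu hKuh hL hLh hLy hLhy mx1 mx2 my1 my2
      hN1 hNδ hNε hw hs hsN he hgap
  choose t ht1 ht2 ht3 using hsel
  refine ⟨-u', neg_ne_zero.2 hu', ρ/2, by positivity, t, ht1, ?_, ht3⟩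
  apply squeeze_zero (fun n => (ht1 n).le) (fun n => (ht2 n).le)
  exact tendsto_one_div_add_atTop_nhds_zero_nat

end Stmt16Aux
namespace Stmt16Aux

variable {X Y : Type*} [NormedAddCommGroup X] [NormedSpace ℝ X]
  [NormedAddCommGroup Y] [NormedSpace ℝ Y]

noncomputable def rhoc (ε δ₁ : ℝ) (Kt : ℕ) : ℝ := min δ₁ (ε/(4*(Kt+1))) / 2

lemma rhoc_pos {ε δ₁ : ℝ} {Kt : ℕ} (hε : 0 < ε) (hδ : 0 < δ₁) : 0 < rhoc ε δ₁ Kt := by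
  unfold rhoc
  have h1 : (0:ℝ) < ε/(4*((Kt:ℝ)+1)) := by positivity
  have := lt_min hδ h1
  linarith

lemma rhoc_le_δ {ε δ₁ : ℝ} {Kt : ℕ} : rhoc ε δ₁ Kt ≤ δ₁ / 2 := by
  unfold rhoc
  have := min_le_left δ₁ (ε/(4*((Kt:ℝ)+1)))
  linarith

lemma rhoc_le_ε {ε δ₁ : ℝ} {Kt : ℕ} : rhoc ε δ₁ Kt ≤ ε/(8*(Kt+1)) := by
  unfold rhoc
  have := min_le_right δ₁ (ε/(4*((Kt:ℝ)+1)))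
  have hpos : (0:ℝ) < (Kt:ℝ)+1 := by positivity
  have h2 : ε/(4*((Kt:ℝ)+1)) / 2 = ε/(8*((Kt:ℝ)+1)) := by
    rw [div_div]
    congr 1
    ring
  linarith

def pieceClsd (f : X → Y) (u' u'' : X) (ε δ₁ δ₂ : ℝ) (Kt : ℕ) : Set X :=
  {x | u' ≠ 0 ∧ 0 < ε ∧ 0 < δ₁ ∧ 0 < δ₂ ∧ ‖u'' - u'‖ ≤ ε/(8*(Kt+1)) ∧
    (∀ y, ‖y - x‖ < δ₂ → ‖f y - f x‖ ≤ Kt * ‖y - x‖) ∧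
    ∃ L₁ : Y, Mod f x u' L₁ δ₁ (ε/4) ∧ Bad f x u'' L₁ ε (ε/(8*(Kt+1)))}

lemma pieceClsd_dirPorous (f : X → Y) (u' u'' : X) (ε δ₁ δ₂ : ℝ) (Kt : ℕ) :
    DirectionallyPorous (pieceClsd f u' u'' ε δ₁ δ₂ Kt) := by
  intro x hx
  obtain ⟨hu', hε, hδ₁, hδ₂, huu, hlipx, L₁, mx, hbad⟩ := hx
  set c := ε/(8*((Kt:ℝ)+1)) with hcdef
  have hc : 0 < c := by rw [hcdef]; positivity
  have hce : c * (8*((Kt:ℝ)+1)) = ε := by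
    rw [hcdef]; field_simp
  set ρ := rhoc ε δ₁ Kt with hρdef
  have hρ : 0 < ρ := rhoc_pos hε hδ₁
  have hρδ : ρ ≤ δ₁/2 := rhoc_le_δ
  have hρc : ρ ≤ c := by rw [hρdef, hcdef]; exact rhoc_le_ε
  have h2cp : (0:ℝ) < 2*c+ρ+1 := by positivity
  have hsel : ∀ n : ℕ, ∃ s : ℝ, 0 < s ∧ s < 1/(n+1) ∧
      ball (x + s • u') (ρ * s) ∩ pieceClsd f u' u'' ε δ₁ δ₂ Kt = ∅ := by
    intro n
    have hδpos : 0 < min (δ₂/(2*c+ρ+1)) (min δ₁ (1/((n:ℝ)+1))) := by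
      apply lt_min
      · positivity
      · exact lt_min hδ₁ (by positivity)
    obtain ⟨w, s, hw, hs, hsδ, hgap⟩ := hbad _ hδpos
    have hs2 : s < δ₂/(2*c+ρ+1) := lt_of_lt_of_le hsδ (min_le_left _ _)
    have hs1 : s < δ₁ := lt_of_lt_of_le hsδ (le_trans (min_le_right _ _) (min_le_left _ _))
    have hsn : s < 1/((n:ℝ)+1) :=
      lt_of_lt_of_le hsδ (le_trans (min_le_right _ _) (min_le_right _ _))
    refine ⟨s, hs, hsn, ?_⟩
    rw [Set.eq_empty_iff_forall_notMem]
    rintro y ⟨hy1, hy2⟩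
    obtain ⟨-, -, -, -, -, hlipy, -⟩ := hy2
    have he : ‖y - (x + s • u')‖ < ρ * s := by rw [← dist_eq_norm]; exact mem_ball.1 hy1
    have hsne : s ≠ 0 := hs.ne'
    have a1 : ‖s⁻¹ • (f y - f x) - L₁‖ ≤ ε/4 := by
      have hpt : x + s • (u' + s⁻¹ • (y - (x + s • u'))) = y := by
        match_scalars <;> field_simp <;> ring
      have hdir : ‖(u' + s⁻¹ • (y - (x + s • u'))) - u'‖ < δ₁ := by
        have h1 : (u' + s⁻¹ • (y - (x + s • u'))) - u' = s⁻¹ • (y - (x + s • u')) := by abel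
        rw [h1, norm_smul, Real.norm_eq_abs, abs_inv, abs_of_pos hs, inv_mul_lt_iff₀ hs]
        calc ‖y - (x + s • u')‖ < ρ * s := he
          _ ≤ s * δ₁ := by nlinarith
      have := mx _ s hdir hs hs1
      rwa [hpt] at this
    have hwu' : ‖w - u'‖ ≤ 2*c := by
      calc ‖w - u'‖ ≤ ‖w - u''‖ + ‖u'' - u'‖ := norm_sub_le_norm_sub_add_norm_sub _ _ _
        _ ≤ c + c := add_le_add hw huu
        _ = 2*c := by ring
    have hzy : ‖(x + s • w) - y‖ ≤ s * (2*c + ρ) := by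
      have h1 : (x + s • w) - y = s • (w - u') - (y - (x + s • u')) := by module
      rw [h1]
      calc ‖s • (w - u') - (y - (x + s • u'))‖
          ≤ ‖s • (w - u')‖ + ‖y - (x + s • u')‖ := norm_sub_le _ _
        _ ≤ s * (2*c) + ρ * s := by
            refine add_le_add ?_ he.le
            rw [norm_smul, Real.norm_of_nonneg hs.le]
            exact mul_le_mul_of_nonneg_left hwu' hs.le
        _ = s * (2*c + ρ) := by ring
    have hzyδ : ‖(x + s • w) - y‖ < δ₂ := by
      rw [lt_div_iff₀ h2cp] at hs2
      calc ‖(x + s • w) - y‖ ≤ s * (2*c + ρ) := hzy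
        _ < δ₂ := by nlinarith
    have a2 : ‖f (x + s • w) - f y‖ ≤ Kt * (s * (2*c + ρ)) := by
      calc ‖f (x + s • w) - f y‖ ≤ Kt * ‖(x + s • w) - y‖ := hlipy (x + s • w) hzyδ
        _ ≤ Kt * (s * (2*c + ρ)) := mul_le_mul_of_nonneg_left hzy (by positivity)
    have hfinal : ‖s⁻¹ • (f (x + s • w) - f x) - L₁‖ ≤ Kt * (2*c + ρ) + ε/4 := by
      have hid : s⁻¹ • (f (x + s • w) - f x) - L₁ =
          s⁻¹ • (f (x + s • w) - f y) + (s⁻¹ • (f y - f x) - L₁) := by module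
      rw [hid]
      calc ‖s⁻¹ • (f (x + s • w) - f y) + (s⁻¹ • (f y - f x) - L₁)‖
          ≤ ‖s⁻¹ • (f (x + s • w) - f y)‖ + ‖s⁻¹ • (f y - f x) - L₁‖ := norm_add_le _ _
        _ ≤ Kt * (2*c + ρ) + ε/4 := by
            refine add_le_add ?_ a1
            rw [norm_smul, Real.norm_eq_abs, abs_inv, abs_of_pos hs, inv_mul_le_iff₀ hs]
            calc ‖f (x + s • w) - f y‖ ≤ Kt * (s * (2*c + ρ)) := a2
              _ = s * (Kt * (2*c + ρ)) := by ring
    have hcontra : (Kt:ℝ) * (2*c + ρ) + ε/4 < ε := by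
      have hKt0 : (0:ℝ) ≤ (Kt:ℝ) := Nat.cast_nonneg Kt
      nlinarith [mul_le_mul_of_nonneg_left hρc hKt0, hce, hc, hε]
    linarith [le_trans hgap hfinal]
  choose t ht1 ht2 ht3 using hsel
  refine ⟨u', hu', ρ, hρ, t, ht1, ?_, ht3⟩
  apply squeeze_zero (fun n => (ht1 n).le) (fun n => (ht2 n).le)
  exact tendsto_one_div_add_atTop_nhds_zero_nat

end Stmt16Aux
namespace Stmt16Aux

variable {X Y : Type*} [NormedAddCommGroup X] [NormedSpace ℝ X]
  [NormedAddCommGroup Y] [NormedSpace ℝ Y]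

lemma ne_zero_of_dist_lt {u u' : X} (h : dist u u' < ‖u‖) : u' ≠ 0 := by
  intro h0
  rw [h0, dist_zero_right] at h
  exact absurd h (lt_irrefl _)

lemma mod_weaken {f : X → Y} {x u : X} {L : Y} {δ ε ε' : ℝ}
    (h : Mod f x u L δ ε) (hεε' : ε ≤ ε') : Mod f x u L δ ε' :=
  fun v t hv ht1 ht2 => le_trans (h v t hv ht1 ht2) hεε'

lemma cover_sub {f : X → Y} {S : Set X} (hS : Dense S) {x u uh : X} {L Lh : Y}
    (hu : u ≠ 0) (hdu : HasHadamardPosDirDeriv f x u L)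
    (hduh : HasHadamardPosDirDeriv f x uh Lh)
    (hbad : ¬ HasHadamardPosDirDeriv f x (uh - u) (Lh - L)) :
    ∃ u' ∈ S, ∃ uh' ∈ S, ∃ ε δ₁ : ℚ, ∃ K : ℕ,
      x ∈ pieceSub f u' uh' (ε:ℝ) (δ₁:ℝ) K := by
  obtain ⟨εR, hεR, hseq⟩ := exists_bad hbad
  obtain ⟨ε, hε0, hεle⟩ : ∃ ε : ℚ, 0 < (ε:ℝ) ∧ (ε:ℝ) ≤ εR := by
    obtain ⟨q, hq1, hq2⟩ := exists_rat_btwn hεR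
    exact ⟨q, hq1, hq2.le⟩
  obtain ⟨δu, hδu, hmodu⟩ := hpdd_mod hdu ((ε:ℝ)/100) (by positivity)
  obtain ⟨δuh, hδuh, hmoduh⟩ := hpdd_mod hduh ((ε:ℝ)/100) (by positivity)
  obtain ⟨δ₁, hδ₁0, hδ₁le⟩ : ∃ δ₁ : ℚ, 0 < (δ₁:ℝ) ∧ (δ₁:ℝ) ≤ min δu δuh / 2 := by
    obtain ⟨q, hq1, hq2⟩ := exists_rat_btwn (show (0:ℝ) < min δu δuh / 2 by
      have := lt_min hδu hδuh; positivity)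
    exact ⟨q, hq1, hq2.le⟩
  set c := rho (δ₁:ℝ) / 2 with hcdef
  have hc : 0 < c := by
    have := rho_pos hδ₁0; rw [hcdef]; linarith
  have hr₁ : (0:ℝ) < min ((δ₁:ℝ)/2) (min (c/4) ‖u‖) := by
    have h1 : (0:ℝ) < ‖u‖ := norm_pos_iff.2 hu
    exact lt_min (by positivity) (lt_min (by positivity) h1)
  obtain ⟨u', hu'S, hu'd⟩ := hS.exists_dist_lt u hr₁
  have hu'ne : u' ≠ 0 :=
    ne_zero_of_dist_lt (lt_of_lt_of_le hu'd (le_trans (min_le_right _ _) (min_le_right _ _)))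
  have hu'δ : ‖u' - u‖ < (δ₁:ℝ)/2 := by
    rw [norm_sub_rev, ← dist_eq_norm]
    exact lt_of_lt_of_le hu'd (min_le_left _ _)
  have hu'c : ‖u' - u‖ < c/4 := by
    rw [norm_sub_rev, ← dist_eq_norm]
    exact lt_of_lt_of_le hu'd (le_trans (min_le_right _ _) (min_le_left _ _))
  have hr₂ : (0:ℝ) < min ((δ₁:ℝ)/2) (c/4) := lt_min (by positivity) (by positivity)
  obtain ⟨uh', huh'S, huh'd⟩ := hS.exists_dist_lt uh hr₂
  have huh'δ : ‖uh' - uh‖ < (δ₁:ℝ)/2 := by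
    rw [norm_sub_rev, ← dist_eq_norm]
    exact lt_of_lt_of_le huh'd (min_le_left _ _)
  have huh'c : ‖uh' - uh‖ < c/4 := by
    rw [norm_sub_rev, ← dist_eq_norm]
    exact lt_of_lt_of_le huh'd (min_le_right _ _)
  refine ⟨u', hu'S, uh', huh'S, ε, δ₁, Nat.ceil (max (max ‖u'‖ ‖uh'‖) (max ‖L‖ ‖Lh‖)), ?_⟩
  set K := Nat.ceil (max (max ‖u'‖ ‖uh'‖) (max ‖L‖ ‖Lh‖)) with hKdef
  have hKle : max (max ‖u'‖ ‖uh'‖) (max ‖L‖ ‖Lh‖) ≤ (K:ℝ) := Nat.le_ceil _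
  refine ⟨hu'ne, hε0, hδ₁0, ?_, ?_, L, Lh, ?_, ?_, ?_, ?_, ?_⟩
  · exact le_trans (le_trans (le_max_left _ _) (le_max_left _ _)) hKle
  · exact le_trans (le_trans (le_max_right _ _) (le_max_left _ _)) hKle
  · exact le_trans (le_trans (le_max_left _ _) (le_max_right _ _)) hKle
  · exact le_trans (le_trans (le_max_right _ _) (le_max_right _ _)) hKle
  · -- Mod at u'
    refine mod_shift hmodu ?_ ?_
    · have : (δ₁:ℝ) ≤ δu / 2 := le_trans hδ₁le (by
        have := min_le_left δu δuh; linarith)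
      linarith
    · have : (δ₁:ℝ) ≤ δu / 2 := le_trans hδ₁le (by
        have := min_le_left δu δuh; linarith)
      linarith
  · refine mod_shift hmoduh ?_ ?_
    · have : (δ₁:ℝ) ≤ δuh / 2 := le_trans hδ₁le (by
        have := min_le_right δu δuh; linarith)
      linarith
    · have : (δ₁:ℝ) ≤ δuh / 2 := le_trans hδ₁le (by
        have := min_le_right δu δuh; linarith)
      linarith
  · -- Bad
    intro δ hδ
    obtain ⟨w, s, hw1, hs0, hs1, hgap⟩ := hseq (min δ (c/2)) (lt_min hδ (by positivity))
    refine ⟨w, s, ?_, hs0, lt_of_lt_of_le hs1 (min_le_left _ _), le_trans hεle hgap⟩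
    have h1 : ‖w - (uh' - u')‖ ≤ ‖w - (uh - u)‖ + ‖uh' - uh‖ + ‖u' - u‖ := by
      have hid : w - (uh' - u') = (w - (uh - u)) - (uh' - uh) + (u' - u) := by module
      rw [hid]
      refine le_trans (norm_add_le _ _) ?_
      have := norm_sub_le (w - (uh - u)) (uh' - uh)
      linarith
    have h2 : ‖w - (uh - u)‖ ≤ c/2 := le_of_lt (lt_of_lt_of_le hw1 (min_le_right _ _))
    have h3 : ‖w - (uh' - u')‖ ≤ c := by linarith
    rwa [hcdef] at h3

end Stmt16Aux
namespace Stmt16Aux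

variable {X Y : Type*} [NormedAddCommGroup X] [NormedSpace ℝ X]
  [NormedAddCommGroup Y] [NormedSpace ℝ Y]

lemma cover_clsd {f : X → Y} {S : Set X} (hS : Dense S) {x u : X} {L : Y}
    (hu : u ≠ 0)
    (hlip : ∃ Kr δr : ℝ, 0 < δr ∧ ∀ y, ‖y - x‖ < δr → ‖f y - f x‖ ≤ Kr * ‖y - x‖)
    (happrox : ∀ r > (0:ℝ), ∃ v : X, ∃ Lv : Y, ‖v - u‖ < r ∧ ‖Lv - L‖ < r ∧
      HasHadamardPosDirDeriv f x v Lv)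
    (hbad : ¬ HasHadamardPosDirDeriv f x u L) :
    ∃ u' ∈ S, ∃ u'' ∈ S, ∃ ε δ₁ δ₂ : ℚ, ∃ Kt : ℕ,
      x ∈ pieceClsd f u' u'' (ε:ℝ) (δ₁:ℝ) (δ₂:ℝ) Kt := by
  obtain ⟨Kr, δr, hδr, hlipf⟩ := hlip
  set Kt := Nat.ceil (max Kr 0) with hKtdef
  have hKrKt : Kr ≤ (Kt:ℝ) := le_trans (le_max_left _ _) (Nat.le_ceil _)
  obtain ⟨δ₂, hδ₂0, hδ₂le⟩ : ∃ δ₂ : ℚ, 0 < (δ₂:ℝ) ∧ (δ₂:ℝ) ≤ δr := by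
    obtain ⟨q, hq1, hq2⟩ := exists_rat_btwn hδr
    exact ⟨q, hq1, hq2.le⟩
  obtain ⟨εR, hεR0, hseq⟩ := exists_bad hbad
  obtain ⟨ε, hε0, hεle⟩ : ∃ ε : ℚ, 0 < (ε:ℝ) ∧ (ε:ℝ) ≤ εR/2 := by
    obtain ⟨q, hq1, hq2⟩ := exists_rat_btwn (show (0:ℝ) < εR/2 by linarith)
    exact ⟨q, hq1, hq2.le⟩
  set c := (ε:ℝ)/(8*((Kt:ℝ)+1)) with hcdef
  have hc : 0 < c := by rw [hcdef]; positivity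
  have hr0 : (0:ℝ) < min (c/4) (min ((ε:ℝ)/4) (‖u‖/2)) := by
    have h1 : (0:ℝ) < ‖u‖ := norm_pos_iff.2 hu
    exact lt_min (by positivity) (lt_min (by positivity) (by positivity))
  obtain ⟨v, Lv, hvu, hLvL, hdv⟩ := happrox _ hr0
  have hvuc : ‖v - u‖ < c/4 := lt_of_lt_of_le hvu (min_le_left _ _)
  have hLvε : ‖Lv - L‖ < (ε:ℝ)/4 :=
    lt_of_lt_of_le hLvL (le_trans (min_le_right _ _) (min_le_left _ _))
  have hv0 : (0:ℝ) < ‖v‖ := by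
    have h1 : ‖v - u‖ < ‖u‖/2 := lt_of_lt_of_le hvu (le_trans (min_le_right _ _) (min_le_right _ _))
    have h2 : ‖u‖ ≤ ‖v‖ + ‖v - u‖ := by
      have h0 := norm_sub_le v (v - u)
      have hid2 : v - (v - u) = u := by module
      rwa [hid2] at h0
    have h3 : (0:ℝ) < ‖u‖ := norm_pos_iff.2 hu
    linarith
  obtain ⟨δv, hδv0, hmodv⟩ := hpdd_mod hdv ((ε:ℝ)/4) (by positivity)
  obtain ⟨δ₁, hδ₁0, hδ₁le⟩ : ∃ δ₁ : ℚ, 0 < (δ₁:ℝ) ∧ (δ₁:ℝ) ≤ δv/2 := by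
    obtain ⟨q, hq1, hq2⟩ := exists_rat_btwn (show (0:ℝ) < δv/2 by linarith)
    exact ⟨q, hq1, hq2.le⟩
  have hr1 : (0:ℝ) < min ((δ₁:ℝ)/2) (min (c/4) ‖v‖) :=
    lt_min (by positivity) (lt_min (by positivity) hv0)
  obtain ⟨u', hu'S, hu'd⟩ := hS.exists_dist_lt v hr1
  have hu'ne : u' ≠ 0 :=
    ne_zero_of_dist_lt (lt_of_lt_of_le hu'd (le_trans (min_le_right _ _) (min_le_right _ _)))
  have hu'δ : ‖u' - v‖ < (δ₁:ℝ)/2 := by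
    rw [norm_sub_rev, ← dist_eq_norm]
    exact lt_of_lt_of_le hu'd (min_le_left _ _)
  have hu'c : ‖u' - v‖ < c/4 := by
    rw [norm_sub_rev, ← dist_eq_norm]
    exact lt_of_lt_of_le hu'd (le_trans (min_le_right _ _) (min_le_left _ _))
  obtain ⟨u'', hu''S, hu''d⟩ := hS.exists_dist_lt u (show (0:ℝ) < c/4 by positivity)
  have hu''c : ‖u'' - u‖ < c/4 := by
    rw [norm_sub_rev, ← dist_eq_norm]; exact hu''d
  refine ⟨u', hu'S, u'', hu''S, ε, δ₁, δ₂, Kt, hu'ne, hε0, hδ₁0, hδ₂0, ?_, ?_, Lv, ?_, ?_⟩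
  · -- ‖u'' - u'‖ ≤ c
    have hid : u'' - u' = (u'' - u) - (v - u) - (u' - v) := by module
    have h1 : ‖u'' - u'‖ ≤ ‖u'' - u‖ + ‖v - u‖ + ‖u' - v‖ := by
      rw [hid]
      refine le_trans (norm_sub_le _ _) ?_
      have := norm_sub_le (u'' - u) (v - u)
      linarith
    rw [← hcdef]
    linarith
  · -- Lipschitz with Kt
    intro y hy
    have h1 := hlipf y (lt_of_lt_of_le hy hδ₂le)
    calc ‖f y - f x‖ ≤ Kr * ‖y - x‖ := h1
      _ ≤ Kt * ‖y - x‖ := mul_le_mul_of_nonneg_right hKrKt (norm_nonneg _)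
  · -- Mod
    exact mod_shift hmodv (by linarith) (by linarith)
  · -- Bad
    intro δ hδ
    obtain ⟨w, s, hw1, hs0, hs1, hgap⟩ := hseq (min δ (c/4)) (lt_min hδ (by positivity))
    refine ⟨w, s, ?_, hs0, lt_of_lt_of_le hs1 (min_le_left _ _), ?_⟩
    · have hid : w - u'' = (w - u) - (u'' - u) := by module
      have h1 : ‖w - u''‖ ≤ ‖w - u‖ + ‖u'' - u‖ := by
        rw [hid]; exact norm_sub_le _ _
      have h2 : ‖w - u‖ < c/4 := lt_of_lt_of_le hw1 (min_le_right _ _)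
      rw [← hcdef]
      linarith
    · -- gap transfer
      have h1 : εR ≤ ‖s⁻¹ • (f (x + s • w) - f x) - L‖ := hgap
      have h2 : ‖s⁻¹ • (f (x + s • w) - f x) - L‖ ≤
          ‖s⁻¹ • (f (x + s • w) - f x) - Lv‖ + ‖Lv - L‖ := by
        have hid : s⁻¹ • (f (x + s • w) - f x) - L =
            (s⁻¹ • (f (x + s • w) - f x) - Lv) + (Lv - L) := by module
        rw [hid]; exact norm_add_le _ _
      linarith
end Stmt16Aux
namespace Stmt16Aux

variable {X Y : Type*} [NormedAddCommGroup X] [NormedSpace ℝ X]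
  [NormedAddCommGroup Y] [NormedSpace ℝ Y]

lemma dirPorous_mono {A B : Set X} (h : DirectionallyPorous A) (hBA : B ⊆ A) :
    DirectionallyPorous B := by
  intro x hx
  obtain ⟨vv, hv, p, hp, t, ht1, ht2, ht3⟩ := h x (hBA hx)
  refine ⟨vv, hv, p, hp, t, ht1, ht2, fun n => ?_⟩
  rw [← Set.subset_empty_iff, ← ht3 n]
  exact Set.inter_subset_inter_right _ hBA

lemma sigma_helper {ι : Type*} [Countable ι] [Nonempty ι] (s : ι → Set X)
    (h : ∀ i, DirectionallyPorous (s i)) : SigmaDirectionallyPorous (⋃ i, s i) := by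
  obtain ⟨g, hg⟩ := exists_surjective_nat ι
  exact ⟨fun n => s (g n), fun n => h (g n), (hg.iUnion_comp s).symm⟩

end Stmt16Aux


open Stmt16Aux in
theorem stmt16 {X Y : Type*} [NormedAddCommGroup X] [NormedSpace ℝ X] [CompleteSpace X]
    [TopologicalSpace.SeparableSpace X]
    [NormedAddCommGroup Y] [NormedSpace ℝ Y] [CompleteSpace Y]
    (G : Set X) (hG : IsOpen G) (f : X → Y) :
    ∃ D : Set X, SigmaDirectionallyPorous D ∧ D ⊆ G ∧
      ∀ x ∈ G \ D,
        {u : X | ∃ L, HasHadamardPosDirDeriv f x u L} = ∅ ∨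
        ∃ V : Submodule ℝ X, (V : Set X) = {u : X | ∃ L, HasHadamardPosDirDeriv f x u L} ∧
          IsClosed (V : Set X) ∧
          ∃ T : V →ₗ[ℝ] Y, ∀ u : V, HasHadamardPosDirDeriv f x (u : X) (T u) := by
  classical
  haveI : Nonempty X := ⟨0⟩
  obtain ⟨S, hSc, hSd⟩ := TopologicalSpace.exists_countable_dense X
  haveI := hSc.to_subtype
  haveI : Nonempty (↥S) := (hSd.nonempty).to_subtype
  let piece1 : (↥S × ↥S) × (ℚ × ℚ) × ℕ → Set X := fun q =>
    pieceSub f (q.1.1 : X) (q.1.2 : X) ((q.2.1.1 : ℚ) : ℝ) ((q.2.1.2 : ℚ) : ℝ) q.2.2 ∩ G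
  let piece2 : (↥S × ↥S) × (ℚ × ℚ × ℚ) × ℕ → Set X := fun q =>
    pieceClsd f (q.1.1 : X) (q.1.2 : X) ((q.2.1.1 : ℚ) : ℝ) ((q.2.1.2.1 : ℚ) : ℝ)
      ((q.2.1.2.2 : ℚ) : ℝ) q.2.2 ∩ G
  let piece := Sum.elim piece1 piece2
  refine ⟨⋃ i, piece i, ?_, ?_, ?_⟩
  · refine sigma_helper piece ?_
    rintro (q | q)
    · exact dirPorous_mono (pieceSub_dirPorous f _ _ _ _ _) Set.inter_subset_left
    · exact dirPorous_mono (pieceClsd_dirPorous f _ _ _ _ _ _) Set.inter_subset_left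
  · intro z hz
    obtain ⟨i, hi⟩ := Set.mem_iUnion.1 hz
    rcases i with q | q
    · exact hi.2
    · exact hi.2
  · rintro x ⟨hxG, hxD⟩
    by_cases hemp : {u : X | ∃ L, HasHadamardPosDirDeriv f x u L} = ∅
    · exact Or.inl hemp
    right
    have hnotSub : ∀ u' ∈ S, ∀ uh' ∈ S, ∀ (ε δ₁ : ℚ) (K : ℕ),
        x ∉ pieceSub f u' uh' (ε:ℝ) (δ₁:ℝ) K := by
      intro u' hu' uh' huh' ε δ₁ K hmem
      exact hxD (Set.mem_iUnion.2
        ⟨Sum.inl ⟨⟨⟨u', hu'⟩, ⟨uh', huh'⟩⟩, ⟨ε, δ₁⟩, K⟩, hmem, hxG⟩)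
    have hnotClsd : ∀ u' ∈ S, ∀ u'' ∈ S, ∀ (ε δ₁ δ₂ : ℚ) (K : ℕ),
        x ∉ pieceClsd f u' u'' (ε:ℝ) (δ₁:ℝ) (δ₂:ℝ) K := by
      intro u' hu' u'' hu'' ε δ₁ δ₂ K hmem
      exact hxD (Set.mem_iUnion.2
        ⟨Sum.inr ⟨⟨⟨u', hu'⟩, ⟨u'', hu''⟩⟩, ⟨ε, δ₁, δ₂⟩, K⟩, hmem, hxG⟩)
    -- the subtraction principle
    have hsub : ∀ (u uh : X) (L Lh : Y), u ≠ 0 → HasHadamardPosDirDeriv f x u L →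
        HasHadamardPosDirDeriv f x uh Lh → HasHadamardPosDirDeriv f x (uh - u) (Lh - L) := by
      intro u uh L Lh hu h1 h2
      by_contra hbad
      obtain ⟨u', hu'S, uh', huh'S, ε, δ₁, K, hmem⟩ := cover_sub hSd hu h1 h2 hbad
      exact hnotSub u' hu'S uh' huh'S ε δ₁ K hmem
    -- derivative selector
    have hderex : ∀ u : X, ∃ M : Y,
        (∃ L, HasHadamardPosDirDeriv f x u L) → HasHadamardPosDirDeriv f x u M := by
      intro u
      by_cases h : ∃ L, HasHadamardPosDirDeriv f x u L
      · exact ⟨h.choose, fun _ => h.choose_spec⟩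
      · exact ⟨0, fun hc => absurd hc h⟩
    choose der hder using hderex
    have hderEq : ∀ (u : X) (L : Y), HasHadamardPosDirDeriv f x u L → der u = L :=
      fun u L h => hpdd_unique (hder u ⟨L, h⟩) h
    obtain ⟨u₀, hu₀⟩ := Set.nonempty_iff_ne_empty.2 hemp
    have hu₀' : ∃ L, HasHadamardPosDirDeriv f x u₀ L := hu₀
    have hzeroV : ∃ L, HasHadamardPosDirDeriv f x (0:X) L := by
      rcases eq_or_ne u₀ 0 with h | h
      · rwa [h] at hu₀'
      · obtain ⟨L, hL⟩ := hu₀'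
        have := hsub u₀ u₀ L L h hL hL
        exact ⟨L - L, by simpa using this⟩
    have h00 : HasHadamardPosDirDeriv f x 0 0 := by
      obtain ⟨L0, hL0⟩ := hzeroV
      rwa [hpdd_zero hL0] at hL0
    have hder0 : der 0 = 0 := hderEq 0 0 h00
    have hnegV : ∀ u : X, (∃ L, HasHadamardPosDirDeriv f x u L) →
        HasHadamardPosDirDeriv f x (-u) (-(der u)) := by
      intro u huV
      rcases eq_or_ne u 0 with h | h
      · subst h
        simpa [hder0] using h00
      · have := hsub u 0 (der u) 0 h (hder u huV) h00
        rw [zero_sub, zero_sub] at this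
        exact this
    have hsubV : ∀ u : X, (∃ L, HasHadamardPosDirDeriv f x u L) → ∀ uh : X,
        (∃ L, HasHadamardPosDirDeriv f x uh L) →
        HasHadamardPosDirDeriv f x (uh - u) (der uh - der u) := by
      intro u huV uh huhV
      rcases eq_or_ne u 0 with h | h
      · subst h
        rw [hder0, sub_zero, sub_zero]
        exact hder uh huhV
      · exact hsub u uh (der u) (der uh) h (hder u huV) (hder uh huhV)
    have haddV : ∀ u : X, (∃ L, HasHadamardPosDirDeriv f x u L) → ∀ uh : X,
        (∃ L, HasHadamardPosDirDeriv f x uh L) →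
        HasHadamardPosDirDeriv f x (u + uh) (der u + der uh) := by
      intro u huV uh huhV
      have hn : HasHadamardPosDirDeriv f x (-u) (-(der u)) := hnegV u huV
      have := hsubV (-u) ⟨_, hn⟩ uh huhV
      rw [hderEq (-u) (-(der u)) hn, sub_neg_eq_add, sub_neg_eq_add] at this
      rw [add_comm u uh, add_comm (der u) (der uh)]
      exact this
    have hsmulV : ∀ (cR : ℝ), ∀ u : X, (∃ L, HasHadamardPosDirDeriv f x u L) →
        HasHadamardPosDirDeriv f x (cR • u) (cR • der u) := by
      intro cR u huV
      rcases lt_trichotomy cR 0 with hc | hc | hc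
      · have hn : HasHadamardPosDirDeriv f x (-u) (-(der u)) := hnegV u huV
        have h1 := hpdd_smul (show (0:ℝ) < -cR by linarith) hn
        have e1 : (-cR) • (-u) = cR • u := by rw [neg_smul, smul_neg, neg_neg]
        have e2 : (-cR) • (-(der u)) = cR • der u := by rw [neg_smul, smul_neg, neg_neg]
        rwa [e1, e2] at h1
      · subst hc
        simpa using h00
      · exact hpdd_smul hc (hder u huV)
    -- pointwise Lipschitz property
    obtain ⟨δL, hδL0, hmod0⟩ := hpdd_mod h00 1 one_pos
    have hlip : ∀ y, ‖y - x‖ < δL*δL/4 → ‖f y - f x‖ ≤ (2/δL) * ‖y - x‖ := by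
      intro y hy
      rcases eq_or_ne y x with h | h
      · simp [h]
      · have hyx : 0 < ‖y - x‖ := by
          rw [norm_pos_iff, sub_ne_zero]; exact h
        set s := 2*‖y - x‖/δL with hsdef
        have hs0 : 0 < s := by rw [hsdef]; positivity
        have hsδ : s < δL := by
          rw [hsdef, div_lt_iff₀ hδL0]; nlinarith
        have hs_eq : s * δL = 2 * ‖y - x‖ := by
          rw [hsdef]; field_simp
        have hv : ‖s⁻¹ • (y - x) - 0‖ < δL := by
          rw [sub_zero, norm_smul, Real.norm_eq_abs, abs_inv, abs_of_pos hs0,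
            inv_mul_eq_div]
          rw [div_lt_iff₀ hs0]
          nlinarith
        have hpt : x + s • (s⁻¹ • (y - x)) = y := by
          rw [smul_smul, mul_inv_cancel₀ hs0.ne', one_smul]; abel
        have hq := hmod0 (s⁻¹ • (y - x)) s hv hs0 hsδ
        rw [hpt, sub_zero, norm_smul, Real.norm_eq_abs, abs_inv, abs_of_pos hs0,
          inv_mul_eq_div, div_le_one hs0] at hq
        calc ‖f y - f x‖ ≤ s := hq
          _ = (2/δL) * ‖y - x‖ := by rw [hsdef]; ring
    -- continuity of der at 0
    have hcont : ∀ ε > (0:ℝ), ∃ δ > (0:ℝ), ∀ u : X,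
        (∃ L, HasHadamardPosDirDeriv f x u L) → ‖u‖ < δ → ‖der u‖ ≤ ε := by
      intro ε hε
      obtain ⟨δ, hδ0, hmod⟩ := hpdd_mod h00 ε hε
      refine ⟨δ, hδ0, fun u huV hu => ?_⟩
      have h1 := (hpdd_dir (hder u huV)).norm
      refine le_of_tendsto h1 ?_
      filter_upwards [Ioo_mem_nhdsGT_of_mem (show (0:ℝ) ∈ Set.Ico (0:ℝ) δ from ⟨le_rfl, hδ0⟩)]
        with t ht
      have := hmod u t (by simpa using hu) ht.1 ht.2
      simpa using this
    -- closedness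
    have hclosed : closure {u : X | ∃ L, HasHadamardPosDirDeriv f x u L} ⊆
        {u : X | ∃ L, HasHadamardPosDirDeriv f x u L} := by
      intro u huc
      by_cases huV : ∃ L, HasHadamardPosDirDeriv f x u L
      · exact huV
      exfalso
      have hune : u ≠ 0 := by
        rintro rfl; exact huV hzeroV
      have hseq : ∀ n : ℕ, ∃ v : X, (∃ L, HasHadamardPosDirDeriv f x v L) ∧
          ‖v - u‖ < 1/((n:ℝ)+1) := by
        intro n
        obtain ⟨v, hv1, hv2⟩ := Metric.mem_closure_iff.1 huc (1/((n:ℝ)+1)) (by positivity)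
        refine ⟨v, hv1, ?_⟩
        rw [← dist_eq_norm, dist_comm]
        exact hv2
      choose v hvV hvu using hseq
      have hcauchy : CauchySeq (fun n => der (v n)) := by
        rw [Metric.cauchySeq_iff]
        intro ε hε
        obtain ⟨δ, hδ0, hδc⟩ := hcont (ε/2) (by linarith)
        obtain ⟨N, hN⟩ := exists_nat_one_div_lt (show (0:ℝ) < δ/2 by linarith)
        refine ⟨N, fun m hm n hn => ?_⟩
        have hb : ∀ k : ℕ, N ≤ k → ‖v k - u‖ < δ/2 := by
          intro k hk
          refine lt_trans (lt_of_lt_of_le (hvu k) ?_) hN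
          apply one_div_le_one_div_of_le (by positivity)
          have : (N:ℝ) ≤ (k:ℝ) := by exact_mod_cast hk
          linarith
        have hmn : ‖v m - v n‖ < δ := by
          have h1 := hb m hm
          have h2 := hb n hn
          have hid : v m - v n = (v m - u) - (v n - u) := by module
          rw [hid]
          calc ‖(v m - u) - (v n - u)‖ ≤ ‖v m - u‖ + ‖v n - u‖ := norm_sub_le _ _
            _ < δ := by linarith
        have hsubd := hsubV (v n) (hvV n) (v m) (hvV m)
        have hmem : ∃ L, HasHadamardPosDirDeriv f x (v m - v n) L := ⟨_, hsubd⟩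
        have := hδc (v m - v n) hmem hmn
        rw [hderEq _ _ hsubd] at this
        rw [dist_eq_norm]
        calc ‖der (v m) - der (v n)‖ ≤ ε/2 := this
          _ < ε := by linarith
      obtain ⟨L, hL⟩ := cauchySeq_tendsto_of_complete hcauchy
      have hbad : ¬ HasHadamardPosDirDeriv f x u L := fun hc => huV ⟨L, hc⟩
      have happrox : ∀ r > (0:ℝ), ∃ w : X, ∃ Lw : Y, ‖w - u‖ < r ∧ ‖Lw - L‖ < r ∧
          HasHadamardPosDirDeriv f x w Lw := by
        intro r hr
        rw [Metric.tendsto_atTop] at hL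
        obtain ⟨N₁, hN₁⟩ := hL r hr
        obtain ⟨N₂, hN₂⟩ := exists_nat_one_div_lt hr
        refine ⟨v (max N₁ N₂), der (v (max N₁ N₂)), ?_, ?_, hder _ (hvV _)⟩
        · refine lt_trans (lt_of_lt_of_le (hvu _) ?_) hN₂
          apply one_div_le_one_div_of_le (by positivity)
          have : (N₂:ℝ) ≤ ((max N₁ N₂ : ℕ):ℝ) := by exact_mod_cast le_max_right N₁ N₂
          linarith
        · rw [← dist_eq_norm]
          exact hN₁ _ (le_max_left _ _)
      obtain ⟨u', hu'S, u'', hu''S, ε, δ₁, δ₂, Kt, hmem⟩ :=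
        cover_clsd hSd hune ⟨2/δL, δL*δL/4, by positivity, hlip⟩ happrox hbad
      exact hnotClsd u' hu'S u'' hu''S ε δ₁ δ₂ Kt hmem
    -- build the submodule and the linear map
    refine ⟨{ carrier := {u : X | ∃ L, HasHadamardPosDirDeriv f x u L},
              add_mem' := ?_, zero_mem' := ?_, smul_mem' := ?_ }, rfl, ?_, ?_⟩
    · intro a b ha hb
      exact ⟨_, haddV a ha b hb⟩
    · exact hzeroV
    · intro cR a ha
      exact ⟨_, hsmulV cR a ha⟩
    · exact isClosed_of_closure_subset hclosed
    · refine ⟨{ toFun := fun u => der u.1,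
                map_add' := fun a b => hderEq _ _ (haddV a.1 a.2 b.1 b.2),
                map_smul' := fun cR a => ?_ }, fun u => hder u.1 u.2⟩
      simp only [RingHom.id_apply]
      exact hderEq _ _ (hsmulV cR a.1 a.2)
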